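/- Let n = 1 and 0 < ω < ω_{p,q}. Let β be the smaller positive zero of F (so F < 0 on (0,β) and F > 0 on (β,θ) for the larger zero θ), and let B > 0 be such that Σ < 0 on (0,B) and Σ > 0 on (B,C) for some C ∈ (B,∞]. Then B < β. -/

import Mathlib

/-- The double power nonlinearity `f(u) = -ω u + u^p - u^q`. -/
noncomputable def f (ω p q u : ℝ) : ℝ := -ω * u + u ^ p - u ^ q

/-- The primitive `F(u) = -(ω/2)u² + u^{p+1}/(p+1) - u^{q+1}/(q+1)`. -/
noncomputable def F (ω p q u : ℝ) : ℝ :=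
  -(ω / 2) * u ^ 2 + u ^ (p + 1) / (p + 1) - u ^ (q + 1) / (q + 1)

/-- The critical frequency `ω_{p,q}`. -/
noncomputable def omegaPQ (p q : ℝ) : ℝ :=
  (2 * (q - p) / ((p + 1) * (q - 1))) *
    (((p - 1) * (q + 1)) / ((p + 1) * (q - 1))) ^ ((p - 1) / (q - p))

/-- The Pohozaev polynomial `Σ(u) = 2nF(u) - (n-2)u f(u)`. -/
noncomputable def Sig (n : ℕ) (ω p q u : ℝ) : ℝ :=
  2 * n * F ω p q u - ((n : ℝ) - 2) * u * f ω p q u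

lemma hasDerivAt_F (p q ω : ℝ) (hp : 1 < p) (hpq : p < q) (u : ℝ) (hu : u ≠ 0) :
    HasDerivAt (F ω p q) (f ω p q u) u := by
  have hp1 : p + 1 ≠ 0 := by nlinarith
  have hq1 : q + 1 ≠ 0 := by nlinarith
  have h1 : HasDerivAt (fun x : ℝ => x ^ (p+1)) ((p+1) * u ^ (p+1-1)) u :=
    Real.hasDerivAt_rpow_const (Or.inl hu)
  have h2 : HasDerivAt (fun x : ℝ => x ^ (q+1)) ((q+1) * u ^ (q+1-1)) u :=
    Real.hasDerivAt_rpow_const (Or.inl hu)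
  have h0 : HasDerivAt (fun x : ℝ => -(ω/2) * x ^ 2) (-(ω/2) * (2*u)) u := by
    simpa using ((hasDerivAt_pow 2 u).const_mul (-(ω/2)))
  have h := (h0.add (h1.div_const (p+1))).sub (h2.div_const (q+1))
  have e1 : p + 1 - 1 = p := by ring
  have e2 : q + 1 - 1 = q := by ring
  rw [e1, e2] at h
  refine h.congr_deriv ?_
  unfold f
  field_simp

lemma continuousOn_F (p q ω : ℝ) (hp : 1 < p) (hpq : p < q) (s : Set ℝ) :
    ContinuousOn (F ω p q) s := by
  have hp1 : (0:ℝ) < p + 1 := by nlinarith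
  have hq1 : (0:ℝ) < q + 1 := by nlinarith
  have c1 : Continuous fun x : ℝ => x ^ (p+1) := by
    apply continuous_iff_continuousAt.2
    exact fun x => Real.continuousAt_rpow_const x (p+1) (Or.inr hp1.le)
  have c2 : Continuous fun x : ℝ => x ^ (q+1) := by
    apply continuous_iff_continuousAt.2
    exact fun x => Real.continuousAt_rpow_const x (q+1) (Or.inr hq1.le)
  exact (((continuous_const.mul (continuous_pow 2)).add
    (c1.div_const _)).sub (c2.div_const _)).continuousOn

/-- For `n = 1` and `0 < ω < ω_{p,q}`: if `β` is the smaller positive zero of `F`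
(`F < 0` on `(0,β)`, `F > 0` on `(β,θ)` with larger zero `θ`) and `B > 0` satisfies
`Σ < 0` on `(0,B)` and `Σ > 0` on `(B,C)` for some `C ∈ (B,∞]`, then `B < β`. -/
theorem B_lt_beta (p q ω : ℝ) (hp : 1 < p) (hpq : p < q) (hω : 0 < ω)
    (n : ℕ) (hn : n = 1) (hωpq : ω < omegaPQ p q)
    (β θ : ℝ) (hβ : 0 < β) (hβθ : β < θ)
    (hF1 : ∀ u, 0 < u → u < β → F ω p q u < 0)
    (hFβ : F ω p q β = 0)
    (hF2 : ∀ u, β < u → u < θ → 0 < F ω p q u)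
    (hFθ : F ω p q θ = 0)
    (B : ℝ) (hB : 0 < B)
    (hSig1 : ∀ v, 0 < v → v < B → Sig n ω p q v < 0)
    (C : EReal) (hBC : (B : EReal) < C)
    (hSig2 : ∀ v : ℝ, B < v → (v : EReal) < C → 0 < Sig n ω p q v) :
    B < β := by
  subst hn
  by_contra hcon
  push_neg at hcon
  -- `G u = u² F(u)` has derivative `u · Σ(u) < 0` on `(0, β)`, hence is strictly
  -- decreasing on `[0, β]`; but `G 0 = 0 = G β`, a contradiction.
  set G : ℝ → ℝ := fun u => u ^ 2 * F ω p q u with hG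
  have hanti : StrictAntiOn G (Set.Icc 0 β) := by
    apply strictAntiOn_of_deriv_neg (convex_Icc 0 β)
    · exact (continuousOn_pow 2).mul (continuousOn_F p q ω hp hpq _)
    · intro x hx
      rw [interior_Icc] at hx
      obtain ⟨hx0, hxβ⟩ := hx
      have hd : HasDerivAt G (x * Sig 1 ω p q x) x := by
        have h := (hasDerivAt_pow 2 x).mul (hasDerivAt_F p q ω hp hpq x (ne_of_gt hx0))
        refine h.congr_deriv ?_
        simp only [Sig]
        push_cast
        ring
      rw [hd.deriv]
      have hxB : x < B := lt_of_lt_of_le hxβ hcon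
      have hs := hSig1 x hx0 hxB
      exact mul_neg_of_pos_of_neg hx0 hs
  have h1 : G β < G 0 := hanti (Set.left_mem_Icc.2 hβ.le) (Set.right_mem_Icc.2 hβ.le) hβ
  have h2 : G 0 = 0 := by simp [hG]
  have h3 : G β = 0 := by simp [hG, hFβ]
  rw [h2, h3] at h1
  exact lt_irrefl 0 h1
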